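/- Let p be an odd prime and let G be a finite p-group of nilpotency class two with G' = Z(G). Let Δ be a symmetric bilinear form on G with associated circle operation x ∘ y = x·y·Δ(x, y). Then there exists a bijection θ: G → G with θ(x·y) = θ(x) ∘ θ(y) for all x, y ∈ G; that is, G and (G, ∘) are isomorphic. -/

import Mathlib

/-- The commutator `[x, y] = x⁻¹ * y⁻¹ * x * y` in the paper's convention. -/
def pcomm {G : Type*} [Group G] (x y : G) : G := x⁻¹ * y⁻¹ * x * y

open scoped commutatorElement

theorem pcomm_mem_commutator {G : Type*} [Group G] (x y : G) :
    pcomm x y ∈ commutator G := by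
  have h : pcomm x y = ⁅x⁻¹, y⁻¹⁆ := by
    simp [pcomm, commutatorElement_def, mul_assoc]
  rw [h, commutator_def]
  exact Subgroup.commutator_mem_commutator (Subgroup.mem_top _) (Subgroup.mem_top _)

/-- A bilinear form on a group `G` of class two with `G' = Z(G)`: a map
`Δ : G/G' × G/G' → G'` which is multiplicative in each variable. -/
def IsBilinearForm {G : Type*} [Group G] (Δ : G → G → G) : Prop :=
  (∀ x y : G, Δ x y ∈ commutator G) ∧
  (∀ x y w : G, w ∈ commutator G → Δ (x * w) y = Δ x y) ∧
  (∀ x y w : G, w ∈ commutator G → Δ x (y * w) = Δ x y) ∧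
  (∀ x₁ x₂ y : G, Δ (x₁ * x₂) y = Δ x₁ y * Δ x₂ y) ∧
  (∀ x y₁ y₂ : G, Δ x (y₁ * y₂) = Δ x y₁ * Δ x y₂)

/-- The circle operation `x ∘ y = x·y·Δ(x, y)` associated to a bilinear form `Δ`. -/
def circ {G : Type*} [Group G] (Δ : G → G → G) (x y : G) : G := x * y * Δ x y

/-- The circle inverse `x^{⊖1} = x⁻¹·Δ(x, x)`. -/
def oinv {G : Type*} [Group G] (Δ : G → G → G) (x : G) : G := x⁻¹ * Δ x x

/-- The circle commutator `[x, y]_∘ = x^{⊖1} ∘ y^{⊖1} ∘ x ∘ y`. -/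
def ocomm {G : Type*} [Group G] (Δ : G → G → G) (x y : G) : G :=
  circ Δ (circ Δ (circ Δ (oinv Δ x) (oinv Δ y)) x) y

/-- if `Δ` is a symmetric bilinear form on `G`, then `G` and the circle
group `(G, ∘)` are isomorphic. -/
theorem stmt_11 {p : ℕ} (hp : p.Prime) (hodd : Odd p)
    {G : Type*} [Group G] [Fintype G] (hpG : IsPGroup p G)
    (hc2 : (⊤ : Subgroup G).lowerCentralSeries 2 = ⊥) (hc1 : (⊤ : Subgroup G).lowerCentralSeries 1 ≠ ⊥)
    (hGZ : commutator G = Subgroup.center G)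
    (Δ : G → G → G) (hΔ : IsBilinearForm Δ)
    (hsym : ∀ x y : G, Δ y x = Δ x y) :
    ∃ θ : G → G, Function.Bijective θ ∧
      ∀ x y : G, θ (x * y) = circ Δ (θ x) (θ y) := by

  haveI : Fact p.Prime := ⟨hp⟩
  obtain ⟨hmem, hL, hR, hadd, hadd'⟩ := hΔ
  obtain ⟨k, hk⟩ := IsPGroup.iff_card.mp hpG
  have hk' : Fintype.card G = p ^ k := by rw [← Nat.card_eq_fintype_card, hk]
  have hNodd : Odd (Fintype.card G) := hk' ▸ hodd.pow
  set N := Fintype.card G with hN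
  set m := (N + 1) / 2 with hm
  have h2m : 2 * m = N + 1 := by
    obtain ⟨t, ht⟩ := hNodd
    omega
  have hcent : ∀ x y : G, Δ x y ∈ Subgroup.center G := fun x y => hGZ ▸ hmem x y
  have hcomm : ∀ (x y g : G), Commute (Δ x y) g := fun x y g =>
    (Subgroup.mem_center_iff.mp (hcent x y) g).symm
  have hpowmem : ∀ x : G, (Δ x x) ^ m ∈ commutator G := fun x => pow_mem (hmem x x) m
  set θ : G → G := fun x => x * (Δ x x) ^ m with hθ
  have hΔθ : ∀ x y : G, Δ (θ x) (θ y) = Δ x y := by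
    intro x y
    simp only [hθ]
    rw [hL _ _ _ (hpowmem x), hR _ _ _ (hpowmem y)]
  refine ⟨θ, ?_, ?_⟩
  · refine Function.bijective_iff_has_inverse.mpr
      ⟨fun z => z * ((Δ z z) ^ m)⁻¹, fun x => ?_, fun z => ?_⟩
    · show θ x * ((Δ (θ x) (θ x)) ^ m)⁻¹ = x
      rw [hΔθ x x]
      simp [hθ, mul_assoc]
    · show (z * ((Δ z z) ^ m)⁻¹) * (Δ (z * ((Δ z z) ^ m)⁻¹) (z * ((Δ z z) ^ m)⁻¹)) ^ m = z
      have hinv : ((Δ z z) ^ m)⁻¹ ∈ commutator G := inv_mem (hpowmem z)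
      rw [hL _ _ _ hinv, hR _ _ _ hinv]
      simp [mul_assoc]
  · intro x y
    have hb : (Δ x y) ^ (2 * m) = Δ x y := by
      rw [h2m, pow_succ, hN, pow_card_eq_one, one_mul]
    have key : (Δ (x * y) (x * y)) ^ m = (Δ x x) ^ m * (Δ y y) ^ m * Δ x y := by
      have e1 : Δ (x * y) (x * y) = Δ x x * Δ x y * (Δ x y * Δ y y) := by
        rw [hadd, hadd', hadd', hsym y x]
      rw [e1]
      have h1 : Commute (Δ x x * Δ x y) (Δ x y * Δ y y) :=
        ((hcomm x x _).mul_left (hcomm x y _))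
      rw [h1.mul_pow, (hcomm x x (Δ x y)).mul_pow, (hcomm x y (Δ y y)).mul_pow]
      have hBB : Δ x y ^ m * Δ x y ^ m = Δ x y := by rw [← pow_add, ← two_mul, hb]
      calc Δ x x ^ m * Δ x y ^ m * (Δ x y ^ m * Δ y y ^ m)
          = Δ x x ^ m * (Δ x y ^ m * Δ x y ^ m) * Δ y y ^ m := by group
        _ = Δ x x ^ m * Δ x y * Δ y y ^ m := by rw [hBB]
        _ = Δ x x ^ m * Δ y y ^ m * Δ x y := by
            rw [mul_assoc, (hcomm x y _).eq, ← mul_assoc]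
    show x * y * (Δ (x * y) (x * y)) ^ m = circ Δ (θ x) (θ y)
    rw [key]
    rw [circ, hΔθ x y]
    show x * y * ((Δ x x) ^ m * (Δ y y) ^ m * Δ x y) =
      x * (Δ x x) ^ m * (y * (Δ y y) ^ m) * Δ x y
    have hc : ∀ g : G, (Δ x x) ^ m * g = g * (Δ x x) ^ m := fun g =>
      ((hcomm x x g).pow_left m).eq
    have e2 : x * Δ x x ^ m * (y * Δ y y ^ m) = x * (y * (Δ x x ^ m * Δ y y ^ m)) := by
      rw [mul_assoc x, ← mul_assoc _ y, hc y]
      group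
    rw [e2]
    group
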